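/- arXiv:1510.05360 — 4 statements merged into one kernel-verified Lean document; each statement's English description precedes it below -/
import Mathlib

section
/- If G is a finite simple graph that is not complete (i.e., G has two distinct non-adjacent vertices) and k ≥ 2 is a natural number, then the girth of the k-independent graph I_k(G) equals 4. -/
/-- A finset of vertices is independent if no two of its members are adjacent. -/
def IsIndep {V : Type*} (G : SimpleGraph V) (s : Finset V) : Prop :=
  ∀ u ∈ s, ∀ v ∈ s, ¬ G.Adj u v

/-- The `k`-independent graph of `G`: vertices are the independent sets of cardinality at most
`k`, two of them adjacent iff one is obtained from the other by adding a single vertex. -/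
def indepGraph {V : Type*} (G : SimpleGraph V) (k : ℕ) :
    SimpleGraph {s : Finset V // IsIndep G s ∧ s.card ≤ k} where
  Adj A B := (A.1 ⊆ B.1 ∧ B.1.card = A.1.card + 1) ∨ (B.1 ⊆ A.1 ∧ A.1.card = B.1.card + 1)
  symm := by
    constructor
    rintro A B (⟨h1, h2⟩ | ⟨h1, h2⟩)
    · exact Or.inr ⟨h1, h2⟩
    · exact Or.inl ⟨h1, h2⟩
  loopless := by
    constructor
    rintro A (⟨_, h⟩ | ⟨_, h⟩) <;> omega
lemma indep_walk_parity {V : Type*} (G : SimpleGraph V) (k : ℕ)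
    {A B : {s : Finset V // IsIndep G s ∧ s.card ≤ k}} (w : (indepGraph G k).Walk A B) :
    (w.length + A.1.card + B.1.card) % 2 = 0 := by
  induction w with
  | nil => simp only [SimpleGraph.Walk.length_nil]; omega
  | cons h p ih =>
    simp only [SimpleGraph.Walk.length_cons]
    rcases h with ⟨_, hc⟩ | ⟨_, hc⟩ <;> omega



theorem indepGraph_girth {V : Type*} [Fintype V] (G : SimpleGraph V) (k : ℕ) (hk : 2 ≤ k)
    (h : ∃ u v : V, u ≠ v ∧ ¬ G.Adj u v) :
    (indepGraph G k).girth = 4 := by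
  classical
  obtain ⟨u, v, huv, hnadj⟩ := h
  have hpair : ({u, v} : Finset V).card = 2 := Finset.card_pair huv
  have hI0 : IsIndep G (∅ : Finset V) := by intro a ha; simp at ha
  have hI1 : IsIndep G ({u} : Finset V) := by
    intro a ha b hb
    simp only [Finset.mem_singleton] at ha hb
    subst ha; subst hb; exact G.irrefl
  have hI3 : IsIndep G ({v} : Finset V) := by
    intro a ha b hb
    simp only [Finset.mem_singleton] at ha hb
    subst ha; subst hb; exact G.irrefl
  have hI2 : IsIndep G ({u, v} : Finset V) := by
    intro a ha b hb
    simp only [Finset.mem_insert, Finset.mem_singleton] at ha hb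
    rcases ha with rfl | rfl <;> rcases hb with rfl | rfl
    · exact G.irrefl
    · exact hnadj
    · exact fun hh => hnadj hh.symm
    · exact G.irrefl
  let A0 : {s : Finset V // IsIndep G s ∧ s.card ≤ k} := ⟨∅, hI0, by simp⟩
  let A1 : {s : Finset V // IsIndep G s ∧ s.card ≤ k} := ⟨{u}, hI1, by simp; omega⟩
  let A2 : {s : Finset V // IsIndep G s ∧ s.card ≤ k} := ⟨{u, v}, hI2, by omega⟩
  let A3 : {s : Finset V // IsIndep G s ∧ s.card ≤ k} := ⟨{v}, hI3, by simp; omega⟩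
  have h01 : (indepGraph G k).Adj A0 A1 :=
    Or.inl ⟨Finset.empty_subset _, by rw [Finset.card_singleton, Finset.card_empty]⟩
  have h12 : (indepGraph G k).Adj A1 A2 :=
    Or.inl ⟨Finset.singleton_subset_iff.mpr (Finset.mem_insert_self u {v}),
      by rw [hpair, Finset.card_singleton]⟩
  have h23 : (indepGraph G k).Adj A2 A3 :=
    Or.inr ⟨Finset.singleton_subset_iff.mpr (Finset.mem_insert_of_mem (Finset.mem_singleton_self v)),
      by rw [hpair, Finset.card_singleton]⟩
  have h30 : (indepGraph G k).Adj A3 A0 :=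
    Or.inr ⟨Finset.empty_subset _, by rw [Finset.card_singleton, Finset.card_empty]⟩
  let w : (indepGraph G k).Walk A0 A0 :=
    .cons h01 (.cons h12 (.cons h23 (.cons h30 .nil)))
  have hne01 : A0 ≠ A1 := fun hh => by
    exact Finset.singleton_ne_empty u (congrArg Subtype.val hh).symm
  have hne02 : A0 ≠ A2 := fun hh => by
    have : ((∅ : Finset V)).card = ({u, v} : Finset V).card := congrArg (fun x => x.1.card) hh
    rw [hpair, Finset.card_empty] at this
    omega
  have hne03 : A0 ≠ A3 := fun hh => by
    exact Finset.singleton_ne_empty v (congrArg Subtype.val hh).symm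
  have hne12 : A1 ≠ A2 := fun hh => by
    have : ({u} : Finset V).card = ({u, v} : Finset V).card := congrArg (fun x => x.1.card) hh
    rw [hpair, Finset.card_singleton] at this
    omega
  have hne13 : A1 ≠ A3 := fun hh => by
    have : ({u} : Finset V) = {v} := congrArg Subtype.val hh
    exact huv (Finset.singleton_inj.mp this)
  have hne23 : A2 ≠ A3 := fun hh => by
    have : ({u, v} : Finset V).card = ({v} : Finset V).card := congrArg (fun x => x.1.card) hh
    rw [hpair, Finset.card_singleton] at this
    omega
  have hcyc : w.IsCycle := by
    simp only [w, SimpleGraph.Walk.isCycle_def, SimpleGraph.Walk.isTrail_def]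
    have h10 := hne01.symm; have h20 := hne02.symm; have h30' := hne03.symm
    have h21 := hne12.symm; have h31 := hne13.symm; have h32 := hne23.symm
    simp [hne01, hne02, hne03, hne12, hne13, hne23, h10, h20, h30', h21, h31, h32]
  have hlen : w.length = 4 := by simp [w]
  have hle : (indepGraph G k).egirth ≤ 4 := by
    have h4 : (indepGraph G k).egirth ≤ (w.length : ℕ∞) := by
      rw [SimpleGraph.egirth]
      exact iInf_le_of_le A0 (iInf_le_of_le w (iInf_le_of_le hcyc le_rfl))
    rwa [hlen] at h4
  have hge : (4 : ℕ∞) ≤ (indepGraph G k).egirth := by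
    rw [SimpleGraph.le_egirth]
    intro a p hp
    have h3 := hp.three_le_length
    have hpar := indep_walk_parity G k p
    have h4 : 4 ≤ p.length := by omega
    exact_mod_cast h4
  have hegirth : (indepGraph G k).egirth = 4 := le_antisymm hle hge
  rw [SimpleGraph.girth, hegirth]
  rfl
end

section
/- For every integer n ≥ 1, the n-independent graph I_n(K_{1,n}) of the star K_{1,n} is not Hamiltonian, i.e., it contains no Hamiltonian cycle. -/
noncomputable instance {V : Type*} [Fintype V] (G : SimpleGraph V) (k : ℕ) :
    Fintype {s : Finset V // IsIndep G s ∧ s.card ≤ k} :=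
  Fintype.ofFinite _

lemma getVert_eq_support_getElem {V : Type*} {G : SimpleGraph V} {u v : V}
    (p : G.Walk u v) (i : ℕ) (h : i ≤ p.length) :
    p.support[i]? = some (p.getVert i) := by
  induction p generalizing i with
  | nil =>
    simp only [SimpleGraph.Walk.length_nil, Nat.le_zero] at h
    subst h; simp [SimpleGraph.Walk.getVert]
  | cons hadj q ih =>
    cases i with
    | zero => simp [SimpleGraph.Walk.getVert]
    | succ j =>
      simp only [SimpleGraph.Walk.support_cons, List.getElem?_cons_succ,
        SimpleGraph.Walk.getVert_cons_succ]
      exact ih j (by simpa [Nat.succ_le_succ_iff] using h)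

lemma IsPath.getVert_injOn {V : Type*} {G : SimpleGraph V} {u v : V}
    {p : G.Walk u v} (hp : p.IsPath) {i j : ℕ} (hi : i ≤ p.length) (hj : j ≤ p.length)
    (hij : p.getVert i = p.getVert j) : i = j := by
  have h1 := getVert_eq_support_getElem p i hi
  have h2 := getVert_eq_support_getElem p j hj
  have hlen : p.support.length = p.length + 1 := SimpleGraph.Walk.length_support p
  refine (List.getElem?_inj (by omega) hp.support_nodup).1 ?_
  rw [h1, h2, hij]

theorem indepGraph_star_not_hamiltonian (n : ℕ) (hn : 1 ≤ n) :
    ¬ (indepGraph (completeBipartiteGraph (Fin 1) (Fin n)) n).IsHamiltonian := by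
  set G := completeBipartiteGraph (Fin 1) (Fin n) with hG
  set G' := indepGraph G n with hG'
  -- the center vertex of the independence graph
  have hAindep : IsIndep G {Sum.inl 0} := by
    intro u hu v hv
    simp only [Finset.mem_singleton] at hu hv
    subst hu; subst hv; exact G.loopless.irrefl _
  set A : {s : Finset (Fin 1 ⊕ Fin n) // IsIndep G s ∧ s.card ≤ n} :=
    ⟨{Sum.inl 0}, hAindep, by simpa using hn⟩ with hA
  have hEindep : IsIndep G (∅ : Finset (Fin 1 ⊕ Fin n)) := by
    intro u hu; simp at hu
  set E : {s : Finset (Fin 1 ⊕ Fin n) // IsIndep G s ∧ s.card ≤ n} :=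
    ⟨∅, hEindep, by simp⟩ with hE
  -- any neighbor of A is the empty set
  have hnbr : ∀ B, G'.Adj A B → B.1 = ∅ := by
    rintro B (⟨hsub, hcard⟩ | ⟨hsub, hcard⟩)
    · exfalso
      have hAcard : (A.1 : Finset (Fin 1 ⊕ Fin n)).card = 1 := by simp [hA]
      rw [hAcard] at hcard
      have hmemA : Sum.inl 0 ∈ B.1 := hsub (by simp [hA])
      have : ∃ x ∈ B.1, x ≠ Sum.inl 0 := by
        by_contra hc
        push_neg at hc
        have : B.1 ⊆ {Sum.inl 0} := fun x hx => Finset.mem_singleton.2 (hc x hx)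
        have := Finset.card_le_card this
        simp [hcard] at this
      obtain ⟨x, hxB, hxne⟩ := this
      rcases x with a | b
      · exact hxne (by rw [Subsingleton.elim a 0])
      · exact B.2.1 _ hmemA _ hxB (by simp [hG])
    · have hAcard : (A.1 : Finset (Fin 1 ⊕ Fin n)).card = 1 := by simp [hA]
      rw [hAcard] at hcard
      exact Finset.card_eq_zero.1 (by omega)
  intro hham
  have hcard : Fintype.card {s : Finset (Fin 1 ⊕ Fin n) // IsIndep G s ∧ s.card ≤ n} ≠ 1 := by
    have hne : A ≠ E := by
      intro h
      have : ({Sum.inl 0} : Finset (Fin 1 ⊕ Fin n)) = ∅ := congrArg Subtype.val h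
      simp at this
    have : 1 < Fintype.card {s : Finset (Fin 1 ⊕ Fin n) // IsIndep G s ∧ s.card ≤ n} :=
      Fintype.one_lt_card_iff.2 ⟨A, E, hne⟩
    omega
  obtain ⟨a, p, hp⟩ := hham hcard
  have hmem : A ∈ p.support := hp.mem_support A
  set q : G'.Walk A A := p.rotate A hmem with hq
  have hqc : q.IsCycle := hp.isCycle.rotate hmem
  have hqlen : 3 ≤ q.length := hqc.three_le_length
  have hqnil : ¬ q.Nil := hqc.not_nil
  -- q.tail is a path from q.getVert 1 to A
  have htail : q.tail.IsPath := by
    have := hqc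
    rw [← SimpleGraph.Walk.cons_tail_eq q hqnil, SimpleGraph.Walk.cons_isCycle_iff] at this
    exact this.1
  have htaillen : q.tail.length + 1 = q.length := SimpleGraph.Walk.length_tail_add_one hqnil
  set r : G'.Walk A (q.getVert 1) := q.tail.reverse with hr
  have hrpath : r.IsPath := htail.reverse
  have hrlen : r.length = q.tail.length := SimpleGraph.Walk.length_reverse _
  have hrnil : ¬ r.Nil := by
    rw [SimpleGraph.Walk.nil_iff_length_eq]
    omega
  -- the second vertex of r is adjacent to A, hence equals the empty set
  have hadj1 : G'.Adj A (r.getVert 1) := SimpleGraph.Walk.adj_snd hrnil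
  have hadj2 : G'.Adj A (q.getVert 1) := SimpleGraph.Walk.adj_snd hqnil
  have h1 : (r.getVert 1).1 = ∅ := hnbr _ hadj1
  have h2 : (q.getVert 1).1 = ∅ := hnbr _ hadj2
  have heq : r.getVert 1 = r.getVert r.length := by
    rw [SimpleGraph.Walk.getVert_length]
    exact Subtype.ext (h1.trans h2.symm)
  have := IsPath.getVert_injOn hrpath (by omega) (le_refl _) heq
  omega
end

section
/- For every integer m ≥ 1 with m not congruent to 1 modulo 3 (i.e., m of the form 3n−1 or 3n), the graph I_{⌈m/2⌉}(P_m), where ⌈m/2⌉ is the independence number of the path P_m on m vertices, is not Hamiltonian. -/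
open Finset SimpleGraph

/-- Along a walk, a sign function flipping across each edge telescopes. -/
lemma walk_tail_sum {α : Type*} {G : SimpleGraph α} (g : α → ℤ)
    (hg : ∀ u v, G.Adj u v → g u = - g v) :
    ∀ {u w : α} (p : G.Walk u w), 2 * (p.support.tail.map g).sum = g w - g u := by
  intro u w p
  induction p with
  | nil => simp
  | @cons u v w h q ih =>
    rw [Walk.support_cons]
    have hq : q.support = v :: q.support.tail := q.support_eq_cons
    have huv := hg u v h
    calc 2 * (((u :: q.support).tail).map g).sum
        = 2 * ((q.support).map g).sum := rfl
      _ = 2 * ((v :: q.support.tail).map g).sum := by rw [← hq]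
      _ = 2 * g v + 2 * ((q.support.tail).map g).sum := by
          rw [List.map_cons, List.sum_cons]; ring
      _ = g w - g u := by rw [ih]; rw [huv]; ring

/-- If a graph has a Hamiltonian cycle, then any sign function flipping across each edge
sums to zero over all vertices. -/
lemma ham_sum_eq_zero {α : Type*} [Fintype α] [DecidableEq α] {G : SimpleGraph α}
    (g : α → ℤ) (hg : ∀ u v, G.Adj u v → g u = - g v)
    {a : α} {p : G.Walk a a} (hp : p.IsHamiltonianCycle) :
    ∑ v, g v = 0 := by
  have h2 := walk_tail_sum g hg p
  simp only [sub_self] at h2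
  have hcount : ∀ b, p.support.tail.count b = 1 :=
    (Walk.isHamiltonianCycle_iff_isCycle_and_support_count_tail_eq_one.mp hp).2
  have hmul : (p.support.tail : Multiset α) = Finset.univ.val := by
    refine Multiset.ext.mpr fun b => ?_
    rw [Multiset.count_univ]
    simpa using hcount b
  have : ∑ v, g v = (p.support.tail.map g).sum := by
    rw [Finset.sum]
    rw [← hmul]
    simp
  omega

/-- Independence predicate for finsets of naturals (no two consecutive). -/
def PIndep (s : Finset ℕ) : Prop := ∀ i ∈ s, i + 1 ∉ s

instance : DecidablePred PIndep := fun s => by unfold PIndep; infer_instance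

/-- Signed count of independent subsets of `{0, …, m-1}`. -/
def Ssum (m : ℕ) : ℤ :=
  ∑ s ∈ (Finset.range m).powerset, if PIndep s then (-1 : ℤ) ^ s.card else 0

lemma Ssum_zero : Ssum 0 = 1 := by decide
lemma Ssum_one : Ssum 1 = 0 := by decide
lemma Ssum_two : Ssum 2 = -1 := by decide

lemma Ssum_rec (m : ℕ) : Ssum (m + 2) = Ssum (m + 1) - Ssum m := by
  have hnm : (m + 1) ∉ Finset.range (m + 1) := by simp
  have hr : Finset.range (m + 2) = insert (m + 1) (Finset.range (m + 1)) := by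
    rw [Finset.range_add_one]
  have step1 : Ssum (m + 2) = Ssum (m + 1) +
      ∑ t ∈ (Finset.range (m + 1)).powerset,
        (if PIndep (insert (m + 1) t) then (-1 : ℤ) ^ (insert (m + 1) t).card else 0) := by
    rw [Ssum, hr, Finset.sum_powerset_insert hnm]
    rfl
  have step2 : ∀ t ∈ (Finset.range (m + 1)).powerset,
      (if PIndep (insert (m + 1) t) then (-1 : ℤ) ^ (insert (m + 1) t).card else 0) =
      (if PIndep t ∧ m ∉ t then -(-1 : ℤ) ^ t.card else 0) := by
    intro t ht
    rw [Finset.mem_powerset] at ht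
    have htm : (m + 1) ∉ t := fun h => by simpa using ht h
    have hcard : (insert (m + 1) t).card = t.card + 1 := Finset.card_insert_of_notMem htm
    have hiff : PIndep (insert (m + 1) t) ↔ (PIndep t ∧ m ∉ t) := by
      constructor
      · intro hP
        constructor
        · intro i hi hi1
          exact hP i (Finset.mem_insert_of_mem hi) (Finset.mem_insert_of_mem hi1)
        · intro hmem
          exact hP m (Finset.mem_insert_of_mem hmem) (Finset.mem_insert_self _ _)
      · rintro ⟨hP, hmt⟩ i hi hi1
        rcases Finset.mem_insert.mp hi with rfl | hi'
        · rcases Finset.mem_insert.mp hi1 with h | h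
          · omega
          · have := ht h; simp at this
        · rcases Finset.mem_insert.mp hi1 with h | h
          · have : i = m := by omega
            exact hmt (this ▸ hi')
          · exact hP i hi' h
    by_cases hc : PIndep t ∧ m ∉ t
    · rw [if_pos (hiff.mpr hc), if_pos hc, hcard, pow_succ]; ring
    · rw [if_neg (fun h => hc (hiff.mp h)), if_neg hc]
  have step3 : ∑ t ∈ (Finset.range (m + 1)).powerset,
      (if PIndep t ∧ m ∉ t then -(-1 : ℤ) ^ t.card else 0) = -Ssum m := by
    have hnm' : m ∉ Finset.range m := by simp
    have hr' : Finset.range (m + 1) = insert m (Finset.range m) := by rw [Finset.range_add_one]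
    rw [hr', Finset.sum_powerset_insert hnm']
    have h1 : ∑ t ∈ (Finset.range m).powerset,
        (if PIndep t ∧ m ∉ t then -(-1 : ℤ) ^ t.card else 0) = -Ssum m := by
      rw [Ssum, ← Finset.sum_neg_distrib]
      refine Finset.sum_congr rfl fun t ht => ?_
      rw [Finset.mem_powerset] at ht
      have hmt : m ∉ t := fun h => by simpa using ht h
      by_cases hP : PIndep t
      · rw [if_pos ⟨hP, hmt⟩, if_pos hP]
      · rw [if_neg (fun h => hP h.1), if_neg hP]; ring
    have h2 : ∑ t ∈ (Finset.range m).powerset,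
        (if PIndep (insert m t) ∧ m ∉ insert m t then -(-1 : ℤ) ^ (insert m t).card else 0)
        = 0 := by
      refine Finset.sum_eq_zero fun t ht => ?_
      rw [if_neg]
      rintro ⟨-, h⟩
      exact h (Finset.mem_insert_self _ _)
    rw [h1, h2, add_zero]
  rw [step1, Finset.sum_congr rfl step2, step3]
  ring

lemma Ssum_flip (m : ℕ) : Ssum (m + 3) = -Ssum m := by
  have h1 : Ssum (m + 3) = Ssum (m + 2) - Ssum (m + 1) := Ssum_rec (m + 1)
  have h2 := Ssum_rec m
  omega

lemma Ssum_ne_zero : ∀ m, m % 3 ≠ 1 → Ssum m ≠ 0 := by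
  intro m
  induction m using Nat.strong_induction_on with
  | _ m ih =>
    match m with
    | 0 => intro _; rw [Ssum_zero]; omega
    | 1 => intro h; omega
    | 2 => intro _; rw [Ssum_two]; omega
    | (k + 3) =>
      intro h
      rw [Ssum_flip]
      have := ih k (by omega) (by omega)
      omega

/-- An independent set in `{0,…,m-1}` has at most `⌈m/2⌉` elements. -/
lemma card_le_half {m : ℕ} {s : Finset ℕ} (hs : ∀ x ∈ s, x < m) (hP : PIndep s) :
    s.card ≤ (m + 1) / 2 := by
  have key : s.card ≤ (Finset.range ((m + 1) / 2)).card := by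
    apply Finset.card_le_card_of_injOn (fun x => x / 2)
    · intro x hx
      simp only [Finset.mem_coe, Finset.mem_range]
      have := hs x hx
      omega
    · intro x hx y hy hxy
      simp only at hxy
      by_contra hne
      rcases Nat.lt_or_ge x y with hl | hl
      · have hy1 : y = x + 1 := by omega
        exact hP x hx (hy1 ▸ hy)
      · have hx1 : x = y + 1 := by omega
        exact hP y hy (hx1 ▸ hx)
  simpa using key

/-- Transfer: the signed sum over the vertices of the indep graph equals `Ssum m`. -/
lemma sum_indep_eq_Ssum (m : ℕ) :
    ∑ v : {s : Finset (Fin m) // IsIndep (SimpleGraph.pathGraph m) s ∧ s.card ≤ (m + 1) / 2},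
      (-1 : ℤ) ^ (v.1.card) = Ssum m := by
  have hfilter : Ssum m =
      ∑ s ∈ (Finset.range m).powerset.filter PIndep, (-1 : ℤ) ^ s.card := by
    rw [Ssum, Finset.sum_filter]
  rw [hfilter]
  refine Finset.sum_bij (fun v _ => v.1.map Fin.valEmbedding) ?_ ?_ ?_ ?_
  · intro v _
    rw [Finset.mem_filter, Finset.mem_powerset]
    constructor
    · intro x hx
      rw [Finset.mem_map] at hx
      obtain ⟨a, _, rfl⟩ := hx
      exact Finset.mem_range.mpr a.isLt
    · intro i hi hi1
      rw [Finset.mem_map] at hi hi1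
      obtain ⟨u, hu, hue⟩ := hi
      obtain ⟨w, hw, hwe⟩ := hi1
      refine v.2.1 u hu w hw ?_
      rw [SimpleGraph.pathGraph_adj]
      left
      simp only [Fin.valEmbedding_apply] at hue hwe
      omega
  · intro v1 _ v2 _ hmap
    exact Subtype.ext (Finset.map_injective _ hmap)
  · intro s hs
    rw [Finset.mem_filter, Finset.mem_powerset] at hs
    obtain ⟨hsub, hP⟩ := hs
    have hlt : ∀ x ∈ s, x < m := fun x hx => Finset.mem_range.mp (hsub hx)
    refine ⟨⟨s.attachFin hlt, ?_, ?_⟩, Finset.mem_univ _, ?_⟩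
    · intro u hu w hw hadj
      rw [Finset.mem_attachFin] at hu hw
      rw [SimpleGraph.pathGraph_adj] at hadj
      rcases hadj with h | h
      · exact hP u.val hu (h ▸ hw)
      · exact hP w.val hw (h ▸ hu)
    · rw [Finset.card_attachFin]
      exact card_le_half hlt hP
    · ext x
      simp only [Finset.mem_map, Finset.mem_attachFin, Fin.valEmbedding_apply]
      constructor
      · rintro ⟨a, ha, rfl⟩; exact ha
      · intro hx; exact ⟨⟨x, hlt x hx⟩, hx, rfl⟩
  · intro v _
    rw [Finset.card_map]

theorem indepGraph_path_not_hamiltonian (m : ℕ) (hm : 1 ≤ m) (h3 : m % 3 ≠ 1) :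
    ¬ (indepGraph (SimpleGraph.pathGraph m) ((m + 1) / 2)).IsHamiltonian := by
  intro hham
  set V := {s : Finset (Fin m) // IsIndep (SimpleGraph.pathGraph m) s ∧ s.card ≤ (m + 1) / 2}
    with hV
  -- two distinct vertices
  have hempty : IsIndep (SimpleGraph.pathGraph m) (∅ : Finset (Fin m)) := by
    intro u hu; simp at hu
  have hz : (0 : ℕ) < m := hm
  have hsing : IsIndep (SimpleGraph.pathGraph m) ({⟨0, hz⟩} : Finset (Fin m)) := by
    intro u hu v hv
    simp only [Finset.mem_singleton] at hu hv
    subst hu; subst hv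
    exact (SimpleGraph.pathGraph m).loopless.irrefl _
  have h1le : 1 ≤ (m + 1) / 2 := by omega
  let a : V := ⟨∅, hempty, by simp⟩
  let b : V := ⟨{⟨0, hz⟩}, hsing, by simpa using h1le⟩
  have hab : a ≠ b := by
    intro h
    have h' : (∅ : Finset (Fin m)) = {⟨0, hz⟩} := congrArg Subtype.val h
    exact Finset.singleton_ne_empty _ h'.symm
  have hcard : Fintype.card V ≠ 1 := by
    have : 1 < Fintype.card V := Fintype.one_lt_card_iff.mpr ⟨a, b, hab⟩
    omega
  obtain ⟨v0, p, hp⟩ := hham hcard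
  have hg : ∀ u w : V, (indepGraph (SimpleGraph.pathGraph m) ((m + 1) / 2)).Adj u w →
      ((-1 : ℤ) ^ (u.1.card)) = -((-1 : ℤ) ^ (w.1.card)) := by
    intro u w hadj
    rcases hadj with ⟨-, h⟩ | ⟨-, h⟩ <;> rw [h] <;> ring
  have hzero := ham_sum_eq_zero (G := indepGraph (SimpleGraph.pathGraph m) ((m + 1) / 2))
    (fun v => (-1 : ℤ) ^ (v.1.card)) hg hp
  rw [sum_indep_eq_Ssum m] at hzero
  exact Ssum_ne_zero m h3 hzero
end

section
/- For every integer n ≥ 4, the graph I_{⌊(n−1)/2⌋}(W_n), where ⌊(n−1)/2⌋ is the independence number of the wheel W_n on n vertices, is not Hamiltonian. -/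
/-- The wheel graph with one hub vertex (`none`) joined to every vertex of a cycle on `m`
vertices; it has `m + 1` vertices in total. -/
def wheelGraph (m : ℕ) : SimpleGraph (Option (Fin m)) where
  Adj a b := a ≠ b ∧ (a = none ∨ b = none ∨
    ∃ i j, a = some i ∧ b = some j ∧ (SimpleGraph.cycleGraph m).Adj i j)
  symm := by
    constructor
    rintro a b ⟨hne, h⟩
    refine ⟨hne.symm, ?_⟩
    rcases h with h | h | ⟨i, j, hi, hj, hadj⟩
    · exact Or.inr (Or.inl h)
    · exact Or.inl h
    · exact Or.inr (Or.inr ⟨j, i, hj, hi, hadj.symm⟩)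
  loopless := by
    constructor
    rintro a ⟨hne, _⟩
    exact hne rfl

section Aux

variable {m k : ℕ}

/-- The empty set as a vertex of the independence graph. -/
def emptyVert (m k : ℕ) : {s : Finset (Option (Fin m)) // IsIndep (wheelGraph m) s ∧ s.card ≤ k} :=
  ⟨∅, by intro u hu; simp at hu, by simp⟩

/-- The hub singleton as a vertex of the independence graph (needs `1 ≤ k`). -/
def hubVert (m k : ℕ) (hk : 1 ≤ k) :
    {s : Finset (Option (Fin m)) // IsIndep (wheelGraph m) s ∧ s.card ≤ k} :=
  ⟨{none}, by
    intro u hu v hv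
    simp only [Finset.mem_singleton] at hu hv
    subst hu; subst hv
    exact (wheelGraph m).loopless.irrefl none, by simpa using hk⟩

lemma hub_neighbor (hk : 1 ≤ k)
    (B : {s : Finset (Option (Fin m)) // IsIndep (wheelGraph m) s ∧ s.card ≤ k})
    (h : (indepGraph (wheelGraph m) k).Adj (hubVert m k hk) B) : B = emptyVert m k := by
  rcases h with ⟨hsub, hcard⟩ | ⟨hsub, hcard⟩
  · exfalso
    have hnone : (none : Option (Fin m)) ∈ B.1 := hsub (by simp [hubVert])
    have h1 : 1 < B.1.card := by
      simp only [hubVert, Finset.card_singleton] at hcard; omega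
    obtain ⟨x, hx, hxne⟩ := Finset.exists_mem_ne h1 none
    exact B.2.1 none hnone x hx ⟨hxne.symm, Or.inl rfl⟩
  · have : B.1.card = 0 := by
      simp only [hubVert, Finset.card_singleton] at hcard; omega
    have hB : B.1 = ∅ := Finset.card_eq_zero.mp this
    apply Subtype.ext
    simp [hB, emptyVert]

end Aux

theorem indepGraph_wheel_not_hamiltonian (n : ℕ) (hn : 4 ≤ n) :
    ¬ (indepGraph (wheelGraph (n - 1)) ((n - 1) / 2)).IsHamiltonian := by
  intro hham
  set m := n - 1 with hm
  set k := (n - 1) / 2 with hk'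
  have hk : 1 ≤ k := by omega
  set G := indepGraph (wheelGraph m) k with hG
  set vh := hubVert m k hk with hvh
  set ve := emptyVert m k with hve
  have hne : ve ≠ vh := by
    intro h
    have h2 : (emptyVert m k).1.card = (hubVert m k hk).1.card := by
      rw [← hve, ← hvh, h]
    simp only [emptyVert, hubVert, Finset.card_empty, Finset.card_singleton] at h2
    omega
  have hcard : Fintype.card {s : Finset (Option (Fin m)) //
      IsIndep (wheelGraph m) s ∧ s.card ≤ k} ≠ 1 := by
    have : 1 < Fintype.card {s : Finset (Option (Fin m)) //
        IsIndep (wheelGraph m) s ∧ s.card ≤ k} :=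
      Fintype.one_lt_card_iff_nontrivial.mpr ⟨ve, vh, hne⟩
    omega
  obtain ⟨a, p, hp⟩ := hham hcard
  -- rotate the Hamiltonian cycle to start at the hub singleton
  have hmem : vh ∈ p.support := hp.mem_support vh
  have hcyc : (p.rotate vh hmem).IsCycle := hp.isCycle.rotate hmem
  set q := p.rotate vh hmem with hq
  have hqlen : 3 ≤ q.length := hcyc.three_le_length
  have hqnil : ¬ q.Nil := hcyc.not_nil
  -- first step: the second vertex is ∅
  have hadj1 : G.Adj vh (q.getVert 1) := q.adj_snd hqnil
  have hb : q.getVert 1 = ve := hub_neighbor hk _ hadj1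
  set q' := q.tail with hq'
  have hq'supp : q'.support = q.support.tail := q.support_tail_of_not_nil hqnil
  have hq'nodup : q'.support.Nodup := hq'supp ▸ hcyc.support_nodup
  have hq'len : q'.length + 1 = q.length := SimpleGraph.Walk.length_tail_add_one hqnil
  have hq'len2 : 2 ≤ q'.length := by omega
  -- reverse: the penultimate vertex is also ∅
  set r0 := q'.reverse with hr0
  have hr0len : r0.length = q'.length := q'.length_reverse
  have hr0nil : ¬ r0.Nil := by
    rw [SimpleGraph.Walk.nil_iff_length_eq]
    omega
  have hadj2 : G.Adj vh (r0.getVert 1) := r0.adj_snd hr0nil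
  have hc : r0.getVert 1 = ve := hub_neighbor hk _ hadj2
  set r := r0.tail with hr
  have hrsupp : r.support = r0.support.tail := r0.support_tail_of_not_nil hr0nil
  have hrnodup : r.support.Nodup := by
    rw [hrsupp]
    have : r0.support = q'.support.reverse := q'.support_reverse
    rw [this]
    exact (List.nodup_reverse.mpr hq'nodup).tail
  have hrlen : r.length + 1 = r0.length := SimpleGraph.Walk.length_tail_add_one hr0nil
  -- now r is a nontrivial path from ∅ to ∅ with nodup support: contradiction
  have hr' : (r.copy hc hb).IsPath := SimpleGraph.Walk.IsPath.mk' (by simpa using hrnodup)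
  have := (SimpleGraph.Walk.isPath_iff_eq_nil (p := _)).mp hr'
  have hlen0 : (r.copy hc hb).length = 0 := by rw [this]; rfl
  simp only [SimpleGraph.Walk.length_copy] at hlen0
  omega
end
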